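/- Let ω ∈ \hat{𝒟}. Then there exists r = r(ω) ∈ (0,1) such that |B^ω_a(z)| ≍ B^ω_a(a) uniformly for all a ∈ 𝔻 and all z in the pseudohyperbolic disc Δ(a,r) = {z : |(a-z)/(1-\bar{a}z)| < r}; i.e., there are constants c,C>0 with c·B^ω_a(a) ≤ |B^ω_a(z)| ≤ C·B^ω_a(a) for all such a,z. -/

import Mathlib

open MeasureTheory Set

/-- The `n`-th moment `ω_n = ∫_0^1 r^n ω(r) dr` of a radial weight. -/
noncomputable def mom (ω : ℝ → ℝ) (n : ℕ) : ℝ := ∫ r in Set.Ioc (0:ℝ) 1, r ^ n * ω r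

/-- The Bergman reproducing kernel of `A²_ω`: `B^ω_a(z) = ∑ (z a̅)^n / (2 ω_{2n+1})`. -/
noncomputable def ker (ω : ℝ → ℝ) (a z : ℂ) : ℂ :=
  ∑' n : ℕ, ((starRingEnd ℂ) a * z) ^ n / (2 * (mom ω (2 * n + 1) : ℂ))

open Finset
namespace Stmt11

variable {ω : ℝ → ℝ}

noncomputable def psi (ω : ℝ → ℝ) (s : ℝ) : ℝ := ∫ t in Set.Ioc (max s 0) 1, ω t

lemma ae_nonneg (hnn : ∀ r ∈ Set.Ico (0:ℝ) 1, 0 ≤ ω r) {u v : ℝ} (hu : 0 ≤ u) (hv : v ≤ 1) :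
    0 ≤ᵐ[volume.restrict (Set.Ioc u v)] ω := by
  have h1 : ∀ᵐ t ∂(volume.restrict (Set.Ioc u v)), t ≠ 1 :=
    ae_restrict_of_ae ((ae_iff).2 (by simpa using (measure_singleton (1:ℝ))))
  filter_upwards [h1, ae_restrict_mem measurableSet_Ioc] with t ht1 ht2
  exact hnn t ⟨le_trans hu ht2.1.le, lt_of_le_of_ne (ht2.2.trans hv) ht1⟩

lemma integrableOn_sub (hint : MeasureTheory.IntegrableOn ω (Set.Ioc (0:ℝ) 1))
    {u v : ℝ} (hu : 0 ≤ u) (hv : v ≤ 1) (n : ℕ) :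
    MeasureTheory.IntegrableOn (fun t => t ^ n * ω t) (Set.Ioc u v) := by
  have hsub : Set.Ioc u v ⊆ Set.Ioc 0 1 := Set.Ioc_subset_Ioc hu hv
  have h0 : MeasureTheory.IntegrableOn ω (Set.Ioc u v) := hint.mono_set hsub
  refine (h0.norm.mono' ?_ ?_)
  · exact ((continuous_pow n).aestronglyMeasurable).mul h0.aestronglyMeasurable
  · filter_upwards [ae_restrict_mem measurableSet_Ioc] with t ht
    have h01 : t ∈ Set.Ioc (0:ℝ) 1 := hsub ht
    have : |t ^ n| ≤ 1 := by
      rw [abs_pow]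
      exact pow_le_one₀ (abs_nonneg t) (abs_le.2 ⟨by linarith [h01.1], h01.2⟩)
    calc ‖t ^ n * ω t‖ = |t ^ n| * |ω t| := abs_mul _ _
      _ ≤ 1 * |ω t| := by gcongr
      _ = ‖ω t‖ := by simp

lemma psi_eq (s : ℝ) (hs : 0 ≤ s) : psi ω s = ∫ t in Set.Ioc s 1, ω t := by
  rw [psi, max_eq_left hs]

lemma psi_anti (hnn : ∀ r ∈ Set.Ico (0:ℝ) 1, 0 ≤ ω r)
    (hint : MeasureTheory.IntegrableOn ω (Set.Ioc (0:ℝ) 1))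
    {s s' : ℝ} (h : s ≤ s') : psi ω s' ≤ psi ω s := by
  unfold psi
  refine setIntegral_mono_set (hint.mono_set (Set.Ioc_subset_Ioc (le_max_right _ _) le_rfl))
    (ae_nonneg hnn (le_max_right _ _) le_rfl)
    (HasSubset.Subset.eventuallyLE (Set.Ioc_subset_Ioc (max_le_max h le_rfl) le_rfl))

lemma psi_pos (hpos : ∀ r ∈ Set.Ico (0:ℝ) 1, 0 < ∫ s in Set.Ioc r 1, ω s)
    {s : ℝ} (hs : s < 1) : 0 < psi ω s := by
  unfold psi
  exact hpos _ ⟨le_max_right _ _, max_lt hs one_pos⟩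

lemma psi_doubling {C : ℝ}
    (hD : ∀ r ∈ Set.Ico (0:ℝ) 1, (∫ s in Set.Ioc r 1, ω s) ≤ C * ∫ s in Set.Ioc ((1 + r) / 2) 1, ω s)
    {s : ℝ} (hs0 : 0 ≤ s) (hs1 : s < 1) : psi ω s ≤ C * psi ω ((1 + s) / 2) := by
  rw [psi_eq s hs0, psi_eq _ (by linarith)]
  exact hD s ⟨hs0, hs1⟩

lemma ae_nonneg_mul (hnn : ∀ r ∈ Set.Ico (0:ℝ) 1, 0 ≤ ω r) {u v : ℝ} (hu : 0 ≤ u) (hv : v ≤ 1)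
    (n : ℕ) : 0 ≤ᵐ[volume.restrict (Set.Ioc u v)] fun t => t ^ n * ω t := by
  filter_upwards [ae_nonneg hnn hu hv, ae_restrict_mem measurableSet_Ioc] with t ht hmem
  exact mul_nonneg (pow_nonneg (le_trans hu hmem.1.le) n) ht

lemma mom_nonneg (hnn : ∀ r ∈ Set.Ico (0:ℝ) 1, 0 ≤ ω r) (n : ℕ) : 0 ≤ mom ω n :=
  integral_nonneg_of_ae (ae_nonneg_mul hnn le_rfl le_rfl n)

lemma mom_anti (hnn : ∀ r ∈ Set.Ico (0:ℝ) 1, 0 ≤ ω r)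
    (hint : MeasureTheory.IntegrableOn ω (Set.Ioc (0:ℝ) 1))
    {n n' : ℕ} (h : n ≤ n') : mom ω n' ≤ mom ω n := by
  refine integral_mono_ae (integrableOn_sub hint le_rfl le_rfl n') (integrableOn_sub hint le_rfl le_rfl n) ?_
  filter_upwards [ae_nonneg hnn le_rfl le_rfl, ae_restrict_mem measurableSet_Ioc] with t ht hmem
  exact mul_le_mul_of_nonneg_right (pow_le_pow_of_le_one hmem.1.le hmem.2 h) ht

lemma mom_le_psi_zero (hnn : ∀ r ∈ Set.Ico (0:ℝ) 1, 0 ≤ ω r)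
    (hint : MeasureTheory.IntegrableOn ω (Set.Ioc (0:ℝ) 1)) (n : ℕ) :
    mom ω n ≤ psi ω 0 := by
  have : psi ω 0 = ∫ t in Set.Ioc (0:ℝ) 1, (1:ℝ) * ω t := by
    rw [psi_eq 0 le_rfl]; simp
  rw [this]
  refine integral_mono_ae (integrableOn_sub hint le_rfl le_rfl n) (by simp only [one_mul]; exact hint) ?_
  filter_upwards [ae_nonneg hnn le_rfl le_rfl, ae_restrict_mem measurableSet_Ioc] with t ht hmem
  exact mul_le_mul_of_nonneg_right (pow_le_one₀ hmem.1.le hmem.2) ht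

/-- Lower bound: `s^n ψ(s) ≤ mom n` for `s ∈ [0,1)`. -/
lemma mom_lower (hnn : ∀ r ∈ Set.Ico (0:ℝ) 1, 0 ≤ ω r)
    (hint : MeasureTheory.IntegrableOn ω (Set.Ioc (0:ℝ) 1))
    {s : ℝ} (hs0 : 0 ≤ s) (hs1 : s ≤ 1) (n : ℕ) :
    s ^ n * psi ω s ≤ mom ω n := by
  have h1 : s ^ n * psi ω s = ∫ t in Set.Ioc s 1, s ^ n * ω t := by
    rw [psi_eq s hs0, ← integral_const_mul]
  rw [h1]
  have h2 : (∫ t in Set.Ioc s 1, s ^ n * ω t) ≤ ∫ t in Set.Ioc s 1, t ^ n * ω t := by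
    refine integral_mono_ae ((hint.mono_set (Set.Ioc_subset_Ioc hs0 le_rfl)).const_mul _)
      (integrableOn_sub hint hs0 le_rfl n) ?_
    filter_upwards [ae_nonneg hnn hs0 le_rfl, ae_restrict_mem measurableSet_Ioc] with t ht hmem
    exact mul_le_mul_of_nonneg_right (pow_le_pow_left₀ hs0 hmem.1.le n) ht
  refine h2.trans ?_
  refine setIntegral_mono_set (integrableOn_sub hint le_rfl le_rfl n)
    (ae_nonneg_mul hnn le_rfl le_rfl n)
    (HasSubset.Subset.eventuallyLE (Set.Ioc_subset_Ioc hs0 le_rfl))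

lemma mom_pos (hnn : ∀ r ∈ Set.Ico (0:ℝ) 1, 0 ≤ ω r)
    (hint : MeasureTheory.IntegrableOn ω (Set.Ioc (0:ℝ) 1))
    (hpos : ∀ r ∈ Set.Ico (0:ℝ) 1, 0 < ∫ s in Set.Ioc r 1, ω s)
    (n : ℕ) : 0 < mom ω n := by
  have h := mom_lower hnn hint (s := 1/2) (by norm_num) (by norm_num) n
  have := psi_pos hpos (s := 1/2) (by norm_num) (ω := ω)
  nlinarith [pow_pos (show (0:ℝ) < 1/2 by norm_num) n]

/-- tail bound -/
lemma tail_le (hnn : ∀ r ∈ Set.Ico (0:ℝ) 1, 0 ≤ ω r)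
    (hint : MeasureTheory.IntegrableOn ω (Set.Ioc (0:ℝ) 1))
    {s : ℝ} (hs0 : 0 ≤ s) (n : ℕ) :
    (∫ t in Set.Ioc s 1, t ^ n * ω t) ≤ psi ω s := by
  rw [psi_eq (ω := ω) s hs0]
  have : (∫ t in Set.Ioc s 1, ω t) = ∫ t in Set.Ioc s 1, (1:ℝ) * ω t := by simp
  rw [this]
  refine integral_mono_ae (integrableOn_sub hint hs0 le_rfl n)
    (by simp only [one_mul]; exact (hint.mono_set (Set.Ioc_subset_Ioc hs0 le_rfl))) ?_
  filter_upwards [ae_nonneg hnn hs0 le_rfl, ae_restrict_mem measurableSet_Ioc] with t ht hmem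
  exact mul_le_mul_of_nonneg_right (pow_le_one₀ (le_trans hs0 hmem.1.le) hmem.2) ht

/-- The key dyadic-induction upper bound. -/
lemma mom_upper {C : ℝ} (hC : 1 ≤ C)
    (hnn : ∀ r ∈ Set.Ico (0:ℝ) 1, 0 ≤ ω r)
    (hint : MeasureTheory.IntegrableOn ω (Set.Ioc (0:ℝ) 1))
    (hpos : ∀ r ∈ Set.Ico (0:ℝ) 1, 0 < ∫ s in Set.Ioc r 1, ω s)
    (hD : ∀ r ∈ Set.Ico (0:ℝ) 1,
      (∫ s in Set.Ioc r 1, ω s) ≤ C * ∫ s in Set.Ioc ((1 + r) / 2) 1, ω s)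
    {k : ℕ} (hk : 1 ≤ k) (hke : Real.exp (-(k:ℝ)/4) ≤ 1/(2*C^2)) :
    ∀ n : ℕ, mom ω n ≤ 2*C * psi ω (1 - k/(n+1)) := by
  have hC0 : (0:ℝ) < C := lt_of_lt_of_le one_pos hC
  have psi_doub : ∀ {s : ℝ}, 0 ≤ s → s < 1 → psi ω s ≤ C * psi ω ((1 + s) / 2) := by
    intro s h0 h1
    rw [psi_eq (ω := ω) s h0, psi_eq (ω := ω) _ (by linarith)]
    exact hD s ⟨h0, h1⟩
  intro n
  induction n using Nat.strong_induction_on with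
  | _ n IH =>
  by_cases hbig : 2*k < n + 1
  · -- inductive step
    set m := n / 2 with hm
    have hmn : m < n := Nat.div_lt_self (by omega) one_lt_two
    have hn1 : (0:ℝ) < (n:ℝ) + 1 := by positivity
    set s : ℝ := 1 - k/(n+1) with hs
    have hx2 : (k:ℝ)/(n+1) < 1/2 := by
      rw [div_lt_iff₀ hn1]
      push_cast; nlinarith [show (2*k:ℝ) < n+1 by exact_mod_cast Nat.cast_lt.mpr hbig]
    have hx0 : (0:ℝ) < (k:ℝ)/(n+1) := by positivity
    have hs0 : (0:ℝ) ≤ s := by rw [hs]; linarith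
    have hs1 : s < 1 := by rw [hs]; linarith
    -- split the integral
    have hsplit : mom ω n = (∫ t in Set.Ioc (0:ℝ) s, t^n * ω t) + ∫ t in Set.Ioc s 1, t^n * ω t := by
      rw [mom, ← setIntegral_union (Set.Ioc_disjoint_Ioc_of_le le_rfl) measurableSet_Ioc
        (integrableOn_sub hint le_rfl hs1.le n) (integrableOn_sub hint hs0 le_rfl n),
        Set.Ioc_union_Ioc_eq_Ioc hs0 hs1.le]
    -- the lower part
    have hlow : (∫ t in Set.Ioc (0:ℝ) s, t^n * ω t) ≤ s^(n-m) * mom ω m := by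
      have h1 : (∫ t in Set.Ioc (0:ℝ) s, t^n * ω t) ≤ ∫ t in Set.Ioc (0:ℝ) s, s^(n-m) * (t^m * ω t) := by
        refine integral_mono_ae (integrableOn_sub hint le_rfl hs1.le n)
          (((integrableOn_sub hint le_rfl hs1.le m)).const_mul _) ?_
        filter_upwards [ae_nonneg hnn le_rfl hs1.le, ae_restrict_mem measurableSet_Ioc] with t ht hmem
        have htn : t^n = t^(n-m) * t^m := by rw [← pow_add]; congr 1; omega
        rw [htn, mul_assoc]
        refine mul_le_mul_of_nonneg_right ?_ (mul_nonneg (pow_nonneg hmem.1.le m) ht)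
        exact pow_le_pow_left₀ hmem.1.le hmem.2 _
      rw [integral_const_mul] at h1
      refine h1.trans (mul_le_mul_of_nonneg_left ?_ (pow_nonneg hs0 _))
      refine setIntegral_mono_set (integrableOn_sub hint le_rfl le_rfl m)
        (ae_nonneg_mul hnn le_rfl le_rfl m)
        (HasSubset.Subset.eventuallyLE (Set.Ioc_subset_Ioc le_rfl hs1.le))
    -- s^(n-m) ≤ exp(-k/4)
    have hexp : s^(n-m) ≤ Real.exp (-(k:ℝ)/4) := by
      have h1 : s ≤ Real.exp (-((k:ℝ)/(n+1))) := by
        have := Real.add_one_le_exp (-((k:ℝ)/(n+1)))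
        rw [hs]; linarith
      calc s^(n-m) ≤ (Real.exp (-((k:ℝ)/(n+1))))^(n-m) := pow_le_pow_left₀ hs0 h1 _
        _ = Real.exp (((n - m : ℕ):ℝ) * (-((k:ℝ)/(n+1)))) := (Real.exp_nat_mul _ _).symm
        _ ≤ Real.exp (-(k:ℝ)/4) := by
            apply Real.exp_le_exp.mpr
            have hcast : ((n - m : ℕ) : ℝ) = (n:ℝ) - m := by
              push_cast [Nat.cast_sub (le_of_lt hmn)]; ring
            rw [hcast]
            have hm2 : (m:ℝ) ≤ (n:ℝ)/2 := by
              rw [hm]; exact_mod_cast Nat.cast_div_le.trans (by norm_num)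
            have hn3 : (2:ℝ) ≤ n := by
              have : 2 ≤ n := by omega
              exact_mod_cast this
            have h4 : ((n:ℝ)+1)/4 ≤ (n:ℝ)-(m:ℝ) := by nlinarith
            have h5 : ((n:ℝ)+1)/4 * ((k:ℝ)/(n+1)) = k/4 := by field_simp
            nlinarith [mul_le_mul_of_nonneg_right h4 hx0.le]
    -- IH at m
    have hIHm : mom ω m ≤ 2*C * psi ω (1 - k/(m+1)) := IH m hmn
    -- psi (1 - k/(m+1)) ≤ C * psi s
    have hpsi_m : psi ω (1 - k/(m+1)) ≤ C * psi ω s := by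
      have hm1 : (0:ℝ) < (m:ℝ) + 1 := by positivity
      have hkm : (k:ℝ) < m + 1 := by
        have : k < m + 1 := by omega
        exact_mod_cast this
      have hsm0 : (0:ℝ) ≤ 1 - k/(m+1) := by
        rw [sub_nonneg, div_le_one hm1]; linarith
      have hsm1 : (1:ℝ) - k/(m+1) < 1 := by
        have : (0:ℝ) < (k:ℝ)/(m+1) := by positivity
        linarith
      refine (psi_doub hsm0 hsm1).trans (mul_le_mul_of_nonneg_left ?_ hC0.le)
      refine psi_anti hnn hint ?_
      have h2m : (n:ℝ) + 1 ≤ 2*(m+1) := by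
        have : n + 1 ≤ 2*(m+1) := by omega
        exact_mod_cast this
      have : (k:ℝ)/(2*(m+1)) ≤ (k:ℝ)/(n+1) := by
        apply div_le_div_of_nonneg_left (by positivity) hn1 h2m
      rw [hs]
      have harith : (1 + (1 - (k:ℝ)/(m+1)))/2 = 1 - (k:ℝ)/(2*(m+1)) := by field_simp; ring
      rw [harith]; linarith
    -- tail
    have htail := tail_le (ω := ω) hnn hint hs0 n
    -- combine
    have hmompos := mom_pos hnn hint hpos m
    have hpsipos := psi_pos hpos hs1
    have hC2 : (0:ℝ) < 2*C^2 := by positivity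
    have h6 : mom ω m ≤ 2*C*(C*psi ω s) := by
      refine hIHm.trans ?_
      rw [mul_assoc, mul_assoc]
      exact mul_le_mul_of_nonneg_left (mul_le_mul_of_nonneg_left hpsi_m hC0.le) (by norm_num)
    have h8 : Real.exp (-(k:ℝ)/4) * (2*C^2) ≤ 1 := by
      have h := mul_le_mul_of_nonneg_right hke hC2.le
      rwa [one_div, inv_mul_cancel₀ (ne_of_gt hC2)] at h
    have hfin : s^(n-m) * mom ω m ≤ psi ω s := by
      calc s^(n-m) * mom ω m ≤ Real.exp (-(k:ℝ)/4) * (2*C*(C*psi ω s)) :=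
            mul_le_mul hexp h6 hmompos.le (Real.exp_pos _).le
        _ = (Real.exp (-(k:ℝ)/4) * (2*C^2)) * psi ω s := by ring
        _ ≤ 1 * psi ω s := mul_le_mul_of_nonneg_right h8 hpsipos.le
        _ = psi ω s := one_mul _
    have h9 : psi ω s ≤ C * psi ω s := le_mul_of_one_le_left hpsipos.le hC
    rw [hsplit]; linarith
  · -- base case
    have hs12 : 1 - (k:ℝ)/(n+1) ≤ 1/2 := by
      have hn1 : (0:ℝ) < (n:ℝ) + 1 := by positivity
      have : (n:ℝ) + 1 ≤ 2*k := by exact_mod_cast Nat.not_lt.mp hbig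
      have : (1:ℝ)/2 ≤ (k:ℝ)/(n+1) := by
        rw [div_le_div_iff₀ (by norm_num) hn1]; linarith
      linarith
    calc mom ω n ≤ psi ω 0 := mom_le_psi_zero hnn hint n
      _ ≤ C * psi ω ((1+0)/2) := psi_doub le_rfl one_pos
      _ ≤ C * psi ω (1 - k/(n+1)) := by
          refine mul_le_mul_of_nonneg_left (psi_anti hnn hint (by norm_num [hs12])) hC0.le
      _ ≤ 2*C * psi ω (1 - k/(n+1)) := by
          have := psi_pos hpos (s := 1 - (k:ℝ)/(n+1)) (by
            have hn1 : (0:ℝ) < (n:ℝ) + 1 := by positivity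
            have : (0:ℝ) < (k:ℝ)/(n+1) := by positivity
            linarith)
          nlinarith
/-- one-minus-x vs exp(-2x) -/
lemma one_sub_ge_exp_neg_two {x : ℝ} (h0 : 0 ≤ x) (h2 : x ≤ 1/2) :
    Real.exp (-(2*x)) ≤ 1 - x := by
  have h1 : 1 + 2*x ≤ Real.exp (2*x) := by
    have := Real.add_one_le_exp (2*x); linarith
  have hpos : (0:ℝ) < 1 + 2*x := by linarith
  have h3 : Real.exp (-(2*x)) = (Real.exp (2*x))⁻¹ := Real.exp_neg _
  rw [h3]
  have h4 : (Real.exp (2*x))⁻¹ ≤ (1+2*x)⁻¹ := by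
    exact inv_anti₀ hpos h1
  refine h4.trans ?_
  rw [inv_le_iff_one_le_mul₀ hpos]  -- maybe wrong name
  nlinarith

/-- Lemma 3: moment comparison. -/
lemma mom_compare {C : ℝ} (hC : 1 ≤ C)
    (hnn : ∀ r ∈ Set.Ico (0:ℝ) 1, 0 ≤ ω r)
    (hint : MeasureTheory.IntegrableOn ω (Set.Ioc (0:ℝ) 1))
    (hpos : ∀ r ∈ Set.Ico (0:ℝ) 1, 0 < ∫ s in Set.Ioc r 1, ω s)
    (hD : ∀ r ∈ Set.Ico (0:ℝ) 1,
      (∫ s in Set.Ioc r 1, ω s) ≤ C * ∫ s in Set.Ioc ((1 + r) / 2) 1, ω s)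
    {k : ℕ} (hk : 1 ≤ k) (hke : Real.exp (-(k:ℝ)/4) ≤ 1/(2*C^2)) :
    ∀ p q : ℕ, q ≤ 2*p+2 → mom ω p ≤ (2*C*Real.exp (4*k)) * mom ω q := by
  have hC0 : (0:ℝ) < C := lt_of_lt_of_le one_pos hC
  intro p q hpq
  by_cases hcase : 2*k ≤ p+1
  · set x : ℝ := (k:ℝ)/(p+1) with hx
    have hp1 : (0:ℝ) < (p:ℝ)+1 := by positivity
    have hx0 : 0 ≤ x := by positivity
    have hx2 : x ≤ 1/2 := by
      rw [hx, div_le_iff₀ hp1]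
      have : (2*k:ℝ) ≤ (p:ℝ)+1 := by exact_mod_cast hcase
      linarith
    set s : ℝ := 1 - x with hs
    have hs0 : (0:ℝ) ≤ s := by rw [hs]; linarith
    have hs1 : s < 1 := by
      have : (0:ℝ) < x := by rw [hx]; positivity
      rw [hs]; linarith
    have h1 : mom ω p ≤ 2*C * psi ω s := mom_upper hC hnn hint hpos hD hk hke p
    have h2 : s^q * psi ω s ≤ mom ω q := mom_lower hnn hint hs0 hs1.le q
    have h3 : Real.exp (-(4*(k:ℝ))) ≤ s^q := by
      have hb : Real.exp (-(2*x)) ≤ s := one_sub_ge_exp_neg_two hx0 hx2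
      calc Real.exp (-(4*(k:ℝ))) ≤ Real.exp ((q:ℝ) * (-(2*x))) := by
            apply Real.exp_le_exp.mpr
            have hq : (q:ℝ) ≤ 2*(p:ℝ)+2 := by exact_mod_cast hpq
            have : (q:ℝ) * (2*x) ≤ 4*(k:ℝ) := by
              rw [hx]
              rw [mul_comm (2:ℝ) _, ← mul_assoc, div_eq_mul_inv, mul_assoc, mul_assoc]
              have expand : (q:ℝ) * ((k:ℝ) * ((((p:ℝ)+1))⁻¹ * 2)) ≤ (2*(p:ℝ)+2) * ((k:ℝ) * ((((p:ℝ)+1))⁻¹ * 2)) := by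
                refine mul_le_mul_of_nonneg_right hq (by positivity)
              refine expand.trans (le_of_eq ?_)
              field_simp; ring
            linarith
        _ = Real.exp (-(2*x)) ^ q := by rw [← Real.exp_nat_mul]
        _ ≤ s^q := pow_le_pow_left₀ (Real.exp_pos _).le hb q
    have hps : 0 < psi ω s := psi_pos hpos hs1
    calc mom ω p ≤ 2*C * psi ω s := h1
      _ = 2*C*Real.exp (4*k) * (Real.exp (-(4*(k:ℝ))) * psi ω s) := by
          rw [← mul_assoc, mul_assoc (2*C) _ _, ← Real.exp_add]
          simp
      _ ≤ 2*C*Real.exp (4*k) * (s^q * psi ω s) := by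
          refine mul_le_mul_of_nonneg_left (mul_le_mul_of_nonneg_right h3 hps.le) (by positivity)
      _ ≤ 2*C*Real.exp (4*k) * mom ω q := by
          refine mul_le_mul_of_nonneg_left h2 (by positivity)
  · -- small p
    have hq4 : q < 4*k := by omega
    have h1 : mom ω p ≤ C * psi ω (1/2) := by
      refine (mom_le_psi_zero hnn hint p).trans ?_
      have := psi_doubling hD (s := (0:ℝ)) le_rfl one_pos
      simpa using this
    have h2 : (1/2:ℝ)^q * psi ω (1/2) ≤ mom ω q := mom_lower hnn hint (by norm_num) (by norm_num) q
    have hps : 0 < psi ω (1/2) := psi_pos hpos (by norm_num)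
    have h3 : Real.exp (-(4*(k:ℝ))) ≤ (1/2:ℝ)^q := by
      calc Real.exp (-(4*(k:ℝ))) ≤ Real.exp ((q:ℝ) * (-Real.log 2)) := by
            apply Real.exp_le_exp.mpr
            have hq : (q:ℝ) ≤ 4*(k:ℝ) := by exact_mod_cast hq4.le
            have hl2 : Real.log 2 ≤ 1 := by
              have := Real.log_le_sub_one_of_pos (show (0:ℝ)<2 by norm_num); linarith
            have hl2' : 0 ≤ Real.log 2 := Real.log_nonneg (by norm_num)
            nlinarith
        _ = (1/2:ℝ)^q := by
            rw [Real.exp_nat_mul, Real.exp_neg, Real.exp_log (by norm_num : (0:ℝ)<2)]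
            rw [one_div, inv_pow]
      
    calc mom ω p ≤ C * psi ω (1/2) := h1
      _ = C * Real.exp (4*k) * (Real.exp (-(4*(k:ℝ))) * psi ω (1/2)) := by
          rw [mul_assoc, ← mul_assoc (Real.exp (4*(k:ℝ))) _ _, ← Real.exp_add]
          simp
      _ ≤ C * Real.exp (4*k) * ((1/2:ℝ)^q * psi ω (1/2)) := by
          refine mul_le_mul_of_nonneg_left (mul_le_mul_of_nonneg_right h3 hps.le) (by positivity)
      _ ≤ C * Real.exp (4*k) * mom ω q := mul_le_mul_of_nonneg_left h2 (by positivity)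
      _ ≤ 2*C*Real.exp (4*k) * mom ω q := by
          have h5 : 0 ≤ C*Real.exp (4*(k:ℝ))*mom ω q := by
            have := (mom_pos hnn hint hpos q).le
            positivity
          linarith

section series
variable {B : ℕ → ℝ} {K : ℝ}

/-- growth of the coefficients -/
lemma B_log (hK : 1 ≤ K) (hBpos : ∀ n, 0 < B n)
    (hBle : ∀ n j : ℕ, n ≤ 2*j+1 → B n ≤ K * B j) :
    ∀ n, B n ≤ B 0 * K ^ (Nat.log 2 n + 1) := by
  have hK0 : (0:ℝ) < K := lt_of_lt_of_le one_pos hK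
  intro n
  induction n using Nat.strong_induction_on with
  | _ n IH =>
  match n, IH with
  | 0, _ => simpa using le_mul_of_one_le_right (hBpos 0).le (by simpa using hK)
  | 1, _ => simpa using (hBle 1 0 (by norm_num)).trans (le_of_eq (by ring))
  | (n+2), IH =>
    set N := n + 2 with hN
    have h1 : B N ≤ K * B (N/2) := hBle N (N/2) (by omega)
    have h2 : B (N/2) ≤ B 0 * K ^ (Nat.log 2 (N/2) + 1) := IH (N/2) (by omega)
    have hlog : Nat.log 2 (N/2) = Nat.log 2 N - 1 := Nat.log_div_base 2 N
    have hpos : 0 < Nat.log 2 N := Nat.log_pos (by norm_num) (by omega)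
    calc B N ≤ K * (B 0 * K ^ (Nat.log 2 (N/2) + 1)) :=
          h1.trans (mul_le_mul_of_nonneg_left h2 hK0.le)
      _ = B 0 * K ^ (Nat.log 2 (N/2) + 2) := by ring
      _ = B 0 * K ^ (Nat.log 2 N + 1) := by
          have he : Nat.log 2 (N/2) + 2 = Nat.log 2 N + 1 := by
            rw [hlog]; have : 1 ≤ Nat.log 2 N := hpos; omega
          rw [he]

lemma B_poly (hK : 1 ≤ K) (hBpos : ∀ n, 0 < B n)
    (hBle : ∀ n j : ℕ, n ≤ 2*j+1 → B n ≤ K * B j) :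
    ∃ m : ℕ, ∀ n, B n ≤ B 0 * K * ((n:ℝ)+1)^m := by
  have hK0 : (0:ℝ) < K := lt_of_lt_of_le one_pos hK
  obtain ⟨m, hm⟩ := pow_unbounded_of_one_lt K (one_lt_two (α := ℝ))
  refine ⟨m, fun n => ?_⟩
  have h1 := B_log hK hBpos hBle n
  have h2 : K ^ (Nat.log 2 n) ≤ ((n:ℝ)+1)^m := by
    rcases Nat.eq_zero_or_pos n with h | h
    · simp [h, one_pow]
    · calc K ^ (Nat.log 2 n) ≤ ((2:ℝ)^m) ^ (Nat.log 2 n) :=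
            pow_le_pow_left₀ hK0.le hm.le _
        _ = ((2:ℝ) ^ (Nat.log 2 n)) ^ m := by rw [← pow_mul, ← pow_mul, Nat.mul_comm]
        _ ≤ ((n:ℝ))^m := by
            refine pow_le_pow_left₀ (by positivity) ?_ m
            have h3 := Nat.pow_log_le_self 2 ((by omega : n ≠ 0))
            exact_mod_cast h3
        _ ≤ ((n:ℝ)+1)^m := by
            refine pow_le_pow_left₀ (by positivity) (by linarith) m
  calc B n ≤ B 0 * K ^ (Nat.log 2 n + 1) := h1
    _ = B 0 * K * K ^ (Nat.log 2 n) := by rw [pow_succ]; ring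
    _ ≤ B 0 * K * ((n:ℝ)+1)^m := by
        have := (hBpos 0).le
        refine mul_le_mul_of_nonneg_left h2 (by positivity)

lemma summable_poly_geom (m : ℕ) {t : ℝ} (h1 : |t| < 1) :
    Summable (fun n : ℕ => ((n:ℝ)+1)^m * t^n) := by
  have h : ∀ n : ℕ, ((n:ℝ)+1)^m * t^n
      = ∑ j ∈ Finset.range (m+1), (m.choose j : ℝ) * ((n:ℝ)^j * t^n) := by
    intro n
    rw [add_pow, Finset.sum_mul]
    refine Finset.sum_congr rfl fun j _ => by rw [one_pow]; ring
  refine Summable.congr (summable_sum (fun j _ => ?_)) (fun n => (h n).symm)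
  exact ((summable_pow_mul_geometric_of_norm_lt_one (r := t) j (by simpa using h1))).mul_left _

end series

section fprop
variable {B : ℕ → ℝ} {K A : ℝ} {m : ℕ}

noncomputable def F (B : ℕ → ℝ) (t : ℝ) : ℝ := ∑' n : ℕ, B n * t^n

lemma summable_f (hpoly : ∀ n, B n ≤ A * ((n:ℝ)+1)^m) (hBpos : ∀ n, 0 < B n)
    {t : ℝ} (h0 : 0 ≤ t) (h1 : t < 1) : Summable (fun n : ℕ => B n * t^n) := by
  refine Summable.of_nonneg_of_le (fun n => mul_nonneg (hBpos n).le (pow_nonneg h0 n)) (fun n => ?_)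
    (((summable_poly_geom m (by rwa [abs_of_nonneg h0])).mul_left A))
  exact mul_le_mul_of_nonneg_right (hpoly n) (pow_nonneg h0 n) |>.trans (le_of_eq (by ring))

lemma summable_nB (hpoly : ∀ n, B n ≤ A * ((n:ℝ)+1)^m) (hBpos : ∀ n, 0 < B n) (hA : 0 < A)
    {t : ℝ} (h0 : 0 ≤ t) (h1 : t < 1) :
    Summable (fun n : ℕ => ((n:ℝ)+1) * B (n+1) * t^n) := by
  refine Summable.of_nonneg_of_le (fun n => mul_nonneg (mul_nonneg (by positivity) (hBpos (n+1)).le) (pow_nonneg h0 n)) (fun n => ?_)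
    (((summable_poly_geom (m+1) (by rwa [abs_of_nonneg h0])).mul_left (A * 2^m)))
  have h2 : B (n+1) ≤ A * 2^m * ((n:ℝ)+1)^m := by
    refine (hpoly (n+1)).trans ?_
    have h3 : (((n+1:ℕ):ℝ)+1)^m ≤ (2*((n:ℝ)+1))^m := by
      refine pow_le_pow_left₀ (by positivity) (by push_cast; linarith) m
    rw [mul_pow] at h3
    calc A * (((n+1:ℕ):ℝ)+1)^m ≤ A * (2^m * ((n:ℝ)+1)^m) :=
          mul_le_mul_of_nonneg_left h3 hA.le
      _ = A * 2^m * ((n:ℝ)+1)^m := by ring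
  calc ((n:ℝ)+1) * B (n+1) * t^n ≤ ((n:ℝ)+1) * (A * 2^m * ((n:ℝ)+1)^m) * t^n := by
        refine mul_le_mul_of_nonneg_right (mul_le_mul_of_nonneg_left h2 (by positivity)) (by positivity)
    _ = A * 2^m * (((n:ℝ)+1)^(m+1) * t^n) := by rw [pow_succ]; ring

lemma summable_sumB (hpoly : ∀ n, B n ≤ A * ((n:ℝ)+1)^m) (hBpos : ∀ n, 0 < B n)
    (hBmono : ∀ {i j : ℕ}, i ≤ j → B i ≤ B j) (hA : 0 < A)
    {t : ℝ} (h0 : 0 ≤ t) (h1 : t < 1) :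
    Summable (fun n : ℕ => (∑ j ∈ Finset.range (n+1), B j) * t^n) := by
  refine Summable.of_nonneg_of_le
    (fun n => mul_nonneg (Finset.sum_nonneg fun j _ => (hBpos j).le) (pow_nonneg h0 n)) (fun n => ?_)
    (((summable_poly_geom (m+1) (by rwa [abs_of_nonneg h0])).mul_left A))
  have h2 : (∑ j ∈ Finset.range (n+1), B j) ≤ ((n:ℝ)+1) * B n := by
    calc (∑ j ∈ Finset.range (n+1), B j) ≤ ∑ _j ∈ Finset.range (n+1), B n :=
          Finset.sum_le_sum fun j hj => hBmono (by simpa using Nat.lt_succ_iff.mp (Finset.mem_range.mp hj))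
      _ = ((n:ℝ)+1) * B n := by
          rw [Finset.sum_const, nsmul_eq_mul, Finset.card_range]
          push_cast; ring
  calc (∑ j ∈ Finset.range (n+1), B j) * t^n ≤ (((n:ℝ)+1) * B n) * t^n :=
        mul_le_mul_of_nonneg_right h2 (pow_nonneg h0 n)
    _ ≤ (((n:ℝ)+1) * (A * ((n:ℝ)+1)^m)) * t^n :=
        mul_le_mul_of_nonneg_right (mul_le_mul_of_nonneg_left (hpoly n) (by positivity)) (pow_nonneg h0 n)
    _ = A * (((n:ℝ)+1)^(m+1) * t^n) := by rw [pow_succ]; ring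

lemma F_ge (hpoly : ∀ n, B n ≤ A * ((n:ℝ)+1)^m) (hBpos : ∀ n, 0 < B n)
    {t : ℝ} (h0 : 0 ≤ t) (h1 : t < 1) : B 0 ≤ F B t := by
  have := Summable.le_tsum (summable_f hpoly hBpos h0 h1) 0
    (fun j _ => mul_nonneg (hBpos j).le (pow_nonneg h0 j))
  simpa [F] using this

lemma F_mono (hpoly : ∀ n, B n ≤ A * ((n:ℝ)+1)^m) (hBpos : ∀ n, 0 < B n)
    {t t' : ℝ} (h0 : 0 ≤ t) (htt : t ≤ t') (h1 : t' < 1) : F B t ≤ F B t' := by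
  refine Summable.tsum_le_tsum (fun n => ?_) (summable_f hpoly hBpos h0 (lt_of_le_of_lt htt h1))
    (summable_f hpoly hBpos (le_trans h0 htt) h1)
  exact mul_le_mul_of_nonneg_left (pow_le_pow_left₀ h0 htt n) (hBpos n).le

lemma F_sq (hpoly : ∀ n, B n ≤ A * ((n:ℝ)+1)^m) (hBpos : ∀ n, 0 < B n) (hK : 1 ≤ K)
    (hBle : ∀ n j : ℕ, n ≤ 2*j+1 → B n ≤ K * B j)
    {t : ℝ} (h0 : 0 ≤ t) (h1 : t < 1) : F B t ≤ 2*K * F B (t^2) := by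
  have ht2a : 0 ≤ t^2 := sq_nonneg t
  have ht2b : t^2 < 1 := by nlinarith
  have hsq : Summable (fun k : ℕ => B k * (t^2)^k) := summable_f hpoly hBpos ht2a ht2b
  have heven : Summable (fun k : ℕ => B (2*k) * t^(2*k)) := by
    refine Summable.of_nonneg_of_le (fun k => mul_nonneg (hBpos (2*k)).le (pow_nonneg h0 _)) (fun k => ?_) (hsq.mul_left K)
    have : B (2*k) ≤ K * B k := hBle (2*k) k (by omega)
    calc B (2*k) * t^(2*k) ≤ (K * B k) * t^(2*k) :=
          mul_le_mul_of_nonneg_right this (pow_nonneg h0 _)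
      _ = K * (B k * (t^2)^k) := by rw [← pow_mul]; ring
  have hodd : Summable (fun k : ℕ => B (2*k+1) * t^(2*k+1)) := by
    refine Summable.of_nonneg_of_le (fun k => mul_nonneg (hBpos (2*k+1)).le (pow_nonneg h0 _)) (fun k => ?_) (hsq.mul_left K)
    have hb : B (2*k+1) ≤ K * B k := hBle (2*k+1) k (by omega)
    have hp : t^(2*k+1) ≤ t^(2*k) := by
      rw [pow_succ]
      exact mul_le_of_le_one_right (pow_nonneg h0 _) h1.le
    calc B (2*k+1) * t^(2*k+1) ≤ (K * B k) * t^(2*k) :=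
          mul_le_mul hb hp (pow_nonneg h0 _) (mul_nonneg (by linarith [lt_of_lt_of_le one_pos hK]) (hBpos k).le)
      _ = K * (B k * (t^2)^k) := by rw [← pow_mul]; ring
  have hsum : HasSum (fun n : ℕ => B n * t^n)
      ((∑' k, B (2*k) * t^(2*k)) + (∑' k, B (2*k+1) * t^(2*k+1))) :=
    HasSum.even_add_odd heven.hasSum hodd.hasSum
  have hFeq : F B t = (∑' k, B (2*k) * t^(2*k)) + (∑' k, B (2*k+1) * t^(2*k+1)) := hsum.tsum_eq
  have he : (∑' k, B (2*k) * t^(2*k)) ≤ K * F B (t^2) := by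
    rw [F, ← tsum_mul_left]
    refine Summable.tsum_le_tsum (fun k => ?_) heven (hsq.mul_left K)
    have : B (2*k) ≤ K * B k := hBle (2*k) k (by omega)
    calc B (2*k) * t^(2*k) ≤ (K * B k) * t^(2*k) :=
          mul_le_mul_of_nonneg_right this (pow_nonneg h0 _)
      _ = K * (B k * (t^2)^k) := by rw [← pow_mul]; ring
  have ho : (∑' k, B (2*k+1) * t^(2*k+1)) ≤ K * F B (t^2) := by
    rw [F, ← tsum_mul_left]
    refine Summable.tsum_le_tsum (fun k => ?_) hodd (hsq.mul_left K)
    have hb : B (2*k+1) ≤ K * B k := hBle (2*k+1) k (by omega)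
    have hp : t^(2*k+1) ≤ t^(2*k) := by
      rw [pow_succ]
      exact mul_le_of_le_one_right (pow_nonneg h0 _) h1.le
    calc B (2*k+1) * t^(2*k+1) ≤ (K * B k) * t^(2*k) :=
          mul_le_mul hb hp (pow_nonneg h0 _) (mul_nonneg (by linarith [lt_of_lt_of_le one_pos hK]) (hBpos k).le)
      _ = K * (B k * (t^2)^k) := by rw [← pow_mul]; ring
  rw [hFeq]; linarith

lemma coeff_bound (hBpos : ∀ n, 0 < B n) (hK : 1 ≤ K)
    (hBmono : ∀ {i j : ℕ}, i ≤ j → B i ≤ B j)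
    (hBle : ∀ n j : ℕ, n ≤ 2*j+1 → B n ≤ K * B j) (n : ℕ) :
    ((n:ℝ)+1) * B (n+1) ≤ 2*K*(∑ j ∈ Finset.range (n+1), B j) := by
  have hK0 : (0:ℝ) < K := lt_of_lt_of_le one_pos hK
  set j0 := (n+1)/2 with hj0
  have h1 : B (n+1) ≤ K * B j0 := hBle (n+1) j0 (by omega)
  have hsub : Finset.Icc j0 n ⊆ Finset.range (n+1) := by
    intro x hx
    simp only [Finset.mem_Icc] at hx
    exact Finset.mem_range.mpr (by omega)
  have h2 : ((Finset.Icc j0 n).card : ℝ) * B j0 ≤ ∑ j ∈ Finset.range (n+1), B j := by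
    calc ((Finset.Icc j0 n).card : ℝ) * B j0 = (Finset.Icc j0 n).card • B j0 := by
          rw [nsmul_eq_mul]
      _ ≤ ∑ j ∈ Finset.Icc j0 n, B j := Finset.card_nsmul_le_sum _ _ _
          (fun x hx => hBmono (Finset.mem_Icc.mp hx).1)
      _ ≤ ∑ j ∈ Finset.range (n+1), B j :=
          Finset.sum_le_sum_of_subset_of_nonneg hsub (fun j _ _ => (hBpos j).le)
  have hcard : (Finset.Icc j0 n).card = n - j0 + 1 := by
    rw [Nat.card_Icc]; omega
  have hcard2 : ((n:ℝ)+1) ≤ 2 * ((Finset.Icc j0 n).card : ℝ) := by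
    rw [hcard]
    have : n + 1 ≤ 2 * (n - j0 + 1) := by omega
    exact_mod_cast this
  calc ((n:ℝ)+1) * B (n+1) ≤ ((n:ℝ)+1) * (K * B j0) :=
        mul_le_mul_of_nonneg_left h1 (by positivity)
    _ ≤ (2 * ((Finset.Icc j0 n).card : ℝ)) * (K * B j0) :=
        mul_le_mul_of_nonneg_right hcard2 (mul_nonneg (by linarith [lt_of_lt_of_le one_pos hK]) (hBpos j0).le)
    _ = 2*K*(((Finset.Icc j0 n).card : ℝ) * B j0) := by ring
    _ ≤ 2*K*(∑ j ∈ Finset.range (n+1), B j) := mul_le_mul_of_nonneg_left h2 (by positivity)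

lemma deriv_bound (hpoly : ∀ n, B n ≤ A * ((n:ℝ)+1)^m) (hBpos : ∀ n, 0 < B n) (hA : 0 < A)
    (hK : 1 ≤ K) (hBmono : ∀ {i j : ℕ}, i ≤ j → B i ≤ B j)
    (hBle : ∀ n j : ℕ, n ≤ 2*j+1 → B n ≤ K * B j)
    {t : ℝ} (h0 : 0 ≤ t) (h1 : t < 1) :
    (∑' n : ℕ, ((n:ℝ)+1) * B (n+1) * t^n) ≤ 2*K * (F B t * (1-t)⁻¹) := by
  have hgeom : Summable (fun n : ℕ => t^n) := summable_geometric_of_lt_one h0 h1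
  have hf := summable_f hpoly hBpos h0 h1
  have hsB := summable_sumB hpoly hBpos hBmono hA h0 h1
  have hprod : F B t * (1-t)⁻¹ = ∑' n : ℕ, (∑ j ∈ Finset.range (n+1), B j) * t^n := by
    have hnorm1 : Summable (fun n : ℕ => ‖B n * t^n‖) := by
      refine hf.congr fun n => ?_
      rw [Real.norm_eq_abs, abs_of_nonneg (mul_nonneg (hBpos n).le (pow_nonneg h0 n))]
    have hnorm2 : Summable (fun n : ℕ => ‖t^n‖) := by
      refine hgeom.congr fun n => ?_
      rw [Real.norm_eq_abs, abs_of_nonneg (by positivity)]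
    have := tsum_mul_tsum_eq_tsum_sum_antidiagonal_of_summable_norm hnorm1 hnorm2
    rw [F, ← tsum_geometric_of_lt_one h0 h1, this]
    congr 1
    funext n
    rw [Finset.Nat.sum_antidiagonal_eq_sum_range_succ (fun i j => (B i * t^i) * t^j)]
    rw [Finset.sum_mul]
    refine Finset.sum_congr rfl fun i hi => ?_
    have hin : i ≤ n := Nat.lt_succ_iff.mp (Finset.mem_range.mp hi)
    rw [mul_assoc, ← pow_add]
    congr 2
    omega
  rw [hprod, ← tsum_mul_left]
  refine Summable.tsum_le_tsum (fun n => ?_) (summable_nB hpoly hBpos hA h0 h1) (hsB.mul_left _)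
  calc ((n:ℝ)+1) * B (n+1) * t^n ≤ (2*K*(∑ j ∈ Finset.range (n+1), B j)) * t^n :=
        mul_le_mul_of_nonneg_right (coeff_bound hBpos hK hBmono hBle n) (pow_nonneg h0 n)
    _ = 2*K*((∑ j ∈ Finset.range (n+1), B j) * t^n) := by ring
/-- comparability of F at points with comparable distance to 1 -/
lemma F_half (hpoly : ∀ n, B n ≤ A * ((n:ℝ)+1)^m) (hBpos : ∀ n, 0 < B n) (hK : 1 ≤ K)
    (hBle : ∀ n j : ℕ, n ≤ 2*j+1 → B n ≤ K * B j)
    {u t : ℝ} (hu0 : 0 ≤ u) (hu1 : u < 1) (ht0 : 0 ≤ t) (ht1 : t < 1)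
    (h : (1-u)/2 ≤ 1-t) :
    F B t ≤ (4*K^2 + F B (3/4) / B 0) * F B u := by
  have hB0 : 0 < B 0 := hBpos 0
  have hFu : 0 < F B u := lt_of_lt_of_le hB0 (F_ge hpoly hBpos hu0 hu1)
  have hF34 : 0 < F B (3/4) :=
    lt_of_lt_of_le hB0 (F_ge hpoly hBpos (by norm_num) (by norm_num))
  have hK0 : (0:ℝ) < K := lt_of_lt_of_le one_pos hK
  by_cases hcase : t ≤ 3/4
  · have h1 : F B t ≤ F B (3/4) := F_mono hpoly hBpos ht0 hcase (by norm_num)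
    have h2 : F B (3/4) = (F B (3/4) / B 0) * B 0 := by field_simp
    calc F B t ≤ F B (3/4) := h1
      _ = (F B (3/4) / B 0) * B 0 := h2
      _ ≤ (F B (3/4) / B 0) * F B u :=
          mul_le_mul_of_nonneg_left (F_ge hpoly hBpos hu0 hu1) (by positivity)
      _ ≤ (4*K^2 + F B (3/4) / B 0) * F B u := by nlinarith
  · push_neg at hcase
    have hu2 : 1/2 < u := by linarith
    have hv0 : (0:ℝ) ≤ (1+u)/2 := by linarith
    have hv1 : (1+u)/2 < 1 := by linarith
    have htv : t ≤ (1+u)/2 := by linarith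
    have hv2 : ((1+u)/2)^2 < 1 := by nlinarith
    have hv4 : (((1+u)/2)^2)^2 ≤ u := by
      have key : 0 ≤ (1-u)*(u^3+5*u^2+11*u-1) := by
        refine mul_nonneg (by linarith) ?_
        nlinarith [pow_pos (show (0:ℝ) < u by linarith) 3, sq_nonneg u]
      nlinarith [key]
    have c1 : F B t ≤ F B ((1+u)/2) := F_mono hpoly hBpos ht0 htv hv1
    have c2 : F B ((1+u)/2) ≤ 2*K * F B (((1+u)/2)^2) := F_sq hpoly hBpos hK hBle hv0 hv1
    have c3 : F B (((1+u)/2)^2) ≤ 2*K * F B ((((1+u)/2)^2)^2) :=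
      F_sq hpoly hBpos hK hBle (by positivity) hv2
    have c4 : F B ((((1+u)/2)^2)^2) ≤ F B u := F_mono hpoly hBpos (by positivity) hv4 hu1
    have hFv2 : 0 ≤ F B ((((1+u)/2)^2)^2) :=
      (lt_of_lt_of_le hB0 (F_ge hpoly hBpos (by positivity) (lt_of_le_of_lt hv4 hu1))).le
    have : F B t ≤ 4*K^2 * F B u := by nlinarith
    nlinarith [hF34.le, hFu.le, mul_nonneg (div_nonneg hF34.le hB0.le) hFu.le]

/-- the central estimate -/
lemma central (hpoly : ∀ n, B n ≤ A * ((n:ℝ)+1)^m) (hBpos : ∀ n, 0 < B n) (hA : 0 < A)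
    (hK : 1 ≤ K) (hBmono : ∀ {i j : ℕ}, i ≤ j → B i ≤ B j)
    (hBle : ∀ n j : ℕ, n ≤ 2*j+1 → B n ≤ K * B j)
    {ε w₀ : ℝ} (hε0 : 0 < ε) (hε2 : ε ≤ 1/2)
    (hε3 : 4*K*(4*K^2 + F B (3/4) / B 0)*ε ≤ 1/2)
    (hw0 : 0 ≤ w₀) (hw1 : w₀ < 1) :
    ε*(1-w₀) * (∑' n : ℕ, ((n:ℝ)+1) * B (n+1) * (w₀ + ε*(1-w₀))^n) ≤ (1/2) * F B w₀ := by
  set L := 4*K^2 + F B (3/4) / B 0 with hL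
  set ρ := w₀ + ε*(1-w₀) with hρ
  have hK0 : (0:ℝ) < K := lt_of_lt_of_le one_pos hK
  have hρ0 : 0 ≤ ρ := by rw [hρ]; nlinarith
  have hρ1 : ρ < 1 := by rw [hρ]; nlinarith
  have hρh : (1-w₀)/2 ≤ 1-ρ := by rw [hρ]; nlinarith
  have hFw : 0 < F B w₀ := lt_of_lt_of_le (hBpos 0) (F_ge hpoly hBpos hw0 hw1)
  have hFρ : 0 < F B ρ := lt_of_lt_of_le (hBpos 0) (F_ge hpoly hBpos hρ0 hρ1)
  have h1 : (∑' n : ℕ, ((n:ℝ)+1) * B (n+1) * ρ^n) ≤ 2*K * (F B ρ * (1-ρ)⁻¹) :=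
    deriv_bound hpoly hBpos hA hK hBmono hBle hρ0 hρ1
  have h2 : F B ρ ≤ L * F B w₀ := F_half hpoly hBpos hK hBle hw0 hw1 hρ0 hρ1 hρh
  have hb : (0:ℝ) < 1-w₀ := by linarith
  have ha : (0:ℝ) < 1-ρ := by linarith
  have hinv : (1-ρ)⁻¹ ≤ 2*(1-w₀)⁻¹ := by
    rw [show (2:ℝ)*(1-w₀)⁻¹ = ((1-w₀)/2)⁻¹ by field_simp]
    exact inv_anti₀ (by linarith) hρh
  have hF34 : 0 < F B (3/4) :=
    lt_of_lt_of_le (hBpos 0) (F_ge hpoly hBpos (by norm_num) (by norm_num))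
  have hL0 : 0 < L := by
    have hdiv : 0 < F B (3/4)/B 0 := div_pos hF34 (hBpos 0)
    rw [hL]; nlinarith [sq_nonneg K]
  have h3 : F B ρ * (1-ρ)⁻¹ ≤ (L * F B w₀) * (2*(1-w₀)⁻¹) :=
    mul_le_mul h2 hinv (inv_nonneg.mpr ha.le) (mul_nonneg hL0.le hFw.le)
  have h4 : (∑' n : ℕ, ((n:ℝ)+1) * B (n+1) * ρ^n) ≤ 4*K*L*(F B w₀ * (1-w₀)⁻¹) := by
    calc (∑' n : ℕ, ((n:ℝ)+1) * B (n+1) * ρ^n) ≤ 2*K * (F B ρ * (1-ρ)⁻¹) := h1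
      _ ≤ 2*K * ((L * F B w₀) * (2*(1-w₀)⁻¹)) := mul_le_mul_of_nonneg_left h3 (by linarith)
      _ = 4*K*L*(F B w₀ * (1-w₀)⁻¹) := by ring
  calc ε*(1-w₀) * (∑' n : ℕ, ((n:ℝ)+1) * B (n+1) * ρ^n)
      ≤ ε*(1-w₀) * (4*K*L*(F B w₀ * (1-w₀)⁻¹)) := by
        refine mul_le_mul_of_nonneg_left h4 (mul_nonneg hε0.le hb.le)
    _ = (4*K*L*ε) * F B w₀ * ((1-w₀) * (1-w₀)⁻¹) := by ring
    _ = (4*K*L*ε) * F B w₀ := by rw [mul_inv_cancel₀ (ne_of_gt hb), mul_one]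
    _ ≤ (1/2) * F B w₀ := mul_le_mul_of_nonneg_right hε3 hFw.le
lemma pow_diff_bound {x y : ℂ} {ρ : ℝ} (hρ : 0 ≤ ρ) (hx : ‖x‖ ≤ ρ) (hy : ‖y‖ ≤ ρ) (n : ℕ) :
    ‖x^n - y^n‖ ≤ (n:ℝ) * ρ^(n-1) * ‖x - y‖ := by
  rw [← geom_sum₂_mul x y n, norm_mul]
  refine mul_le_mul_of_nonneg_right ?_ (norm_nonneg _)
  calc ‖∑ i ∈ Finset.range n, x ^ i * y ^ (n - 1 - i)‖
      ≤ ∑ i ∈ Finset.range n, ‖x ^ i * y ^ (n - 1 - i)‖ := norm_sum_le _ _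
    _ ≤ ∑ _i ∈ Finset.range n, ρ^(n-1) := by
        refine Finset.sum_le_sum fun i hi => ?_
        rw [norm_mul, norm_pow, norm_pow]
        have hin : i < n := Finset.mem_range.mp hi
        calc ‖x‖^i * ‖y‖^(n-1-i) ≤ ρ^i * ρ^(n-1-i) := by
              refine mul_le_mul (pow_le_pow_left₀ (norm_nonneg _) hx i)
                (pow_le_pow_left₀ (norm_nonneg _) hy _) (pow_nonneg (norm_nonneg _) _)
                (pow_nonneg hρ _)
          _ = ρ^(n-1) := by rw [← pow_add]; congr 1; omega
    _ = (n:ℝ) * ρ^(n-1) := by rw [Finset.sum_const, Finset.card_range, nsmul_eq_mul]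

lemma complex_est (hpoly : ∀ n, B n ≤ A * ((n:ℝ)+1)^m) (hBpos : ∀ n, 0 < B n) (hA : 0 < A)
    (hK : 1 ≤ K) (hBmono : ∀ {i j : ℕ}, i ≤ j → B i ≤ B j)
    (hBle : ∀ n j : ℕ, n ≤ 2*j+1 → B n ≤ K * B j)
    {ε w₀ : ℝ} (hε0 : 0 < ε) (hε2 : ε ≤ 1/2)
    (hε3 : 4*K*(4*K^2 + F B (3/4) / B 0)*ε ≤ 1/2)
    (hw0 : 0 ≤ w₀) (hw1 : w₀ < 1)
    {w : ℂ} (hw : ‖w - (w₀:ℂ)‖ ≤ ε*(1-w₀)) :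
    ‖(∑' n : ℕ, (B n : ℂ) * w^n) - ((F B w₀ : ℝ) : ℂ)‖ ≤ (1/2) * F B w₀ := by
  set ρ := w₀ + ε*(1-w₀) with hρdef
  have hρ0 : 0 ≤ ρ := by rw [hρdef]; nlinarith
  have hρ1 : ρ < 1 := by rw [hρdef]; nlinarith
  have hwρ : ‖w‖ ≤ ρ := by
    calc ‖w‖ = ‖(w₀:ℂ) + (w - w₀)‖ := by ring_nf
      _ ≤ ‖(w₀:ℂ)‖ + ‖w - (w₀:ℂ)‖ := norm_add_le _ _
      _ ≤ w₀ + ε*(1-w₀) := by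
          rw [Complex.norm_real, Real.norm_eq_abs, abs_of_nonneg hw0]
          linarith
  have hw0ρ : ‖(w₀:ℂ)‖ ≤ ρ := by
    rw [Complex.norm_real, Real.norm_eq_abs, abs_of_nonneg hw0]
    nlinarith
  have hsρ : Summable (fun n : ℕ => B n * ρ^n) := summable_f hpoly hBpos hρ0 hρ1
  have hG : Summable (fun n : ℕ => (B n : ℂ) * w^n) := by
    refine Summable.of_norm ?_
    refine Summable.of_nonneg_of_le (fun n => norm_nonneg _) (fun n => ?_) hsρ
    rw [norm_mul, Complex.norm_real, Real.norm_eq_abs, abs_of_nonneg (hBpos n).le, norm_pow]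
    exact mul_le_mul_of_nonneg_left (pow_le_pow_left₀ (norm_nonneg _) hwρ n) (hBpos n).le
  have hG0 : Summable (fun n : ℕ => (B n : ℂ) * (w₀:ℂ)^n) := by
    refine Summable.of_norm ?_
    refine Summable.of_nonneg_of_le (fun n => norm_nonneg _) (fun n => ?_) hsρ
    rw [norm_mul, Complex.norm_real, Real.norm_eq_abs, abs_of_nonneg (hBpos n).le, norm_pow]
    exact mul_le_mul_of_nonneg_left (pow_le_pow_left₀ (norm_nonneg _) hw0ρ n) (hBpos n).le
  have hcast : ((F B w₀ : ℝ) : ℂ) = ∑' n : ℕ, (B n : ℂ) * (w₀:ℂ)^n := by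
    rw [F, Complex.ofReal_tsum]
    congr 1; funext n; push_cast; ring
  have hdiff : (∑' n : ℕ, (B n : ℂ) * w^n) - ((F B w₀ : ℝ) : ℂ)
      = ∑' n : ℕ, (B n : ℂ) * (w^n - (w₀:ℂ)^n) := by
    rw [hcast, ← Summable.tsum_sub hG hG0]
    congr 1; funext n; ring
  -- the dominating series
  set g : ℕ → ℝ := fun n => B n * ((n:ℝ) * ρ^(n-1) * (ε*(1-w₀))) with hg
  have hgsum : Summable g := by
    refine (summable_nat_add_iff 1).mp ?_
    refine Summable.congr (((summable_nB hpoly hBpos hA hρ0 hρ1).mul_right (ε*(1-w₀)))) ?_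
    intro n
    rw [hg]
    push_cast

    ring
  have hnorm : Summable (fun n : ℕ => ‖(B n : ℂ) * (w^n - (w₀:ℂ)^n)‖) := by
    refine Summable.of_nonneg_of_le (fun n => norm_nonneg _) (fun n => ?_) hgsum
    rw [norm_mul, Complex.norm_real, Real.norm_eq_abs, abs_of_nonneg (hBpos n).le]
    refine mul_le_mul_of_nonneg_left ?_ (hBpos n).le
    exact (pow_diff_bound hρ0 hwρ hw0ρ n).trans
      (mul_le_mul_of_nonneg_left hw (by positivity))
  have hgval : ∑' n, g n
      = ε*(1-w₀) * (∑' n : ℕ, ((n:ℝ)+1) * B (n+1) * ρ^n) := by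
    rw [Summable.tsum_eq_zero_add hgsum]
    have hg0 : g 0 = 0 := by rw [hg]; simp
    rw [hg0, zero_add]
    have : ∀ n : ℕ, g (n+1) = (((n:ℝ)+1) * B (n+1) * ρ^n) * (ε*(1-w₀)) := by
      intro n; rw [hg]; push_cast; ring
    rw [tsum_congr this, tsum_mul_right]
    ring
  calc ‖(∑' n : ℕ, (B n : ℂ) * w^n) - ((F B w₀ : ℝ) : ℂ)‖
      = ‖∑' n : ℕ, (B n : ℂ) * (w^n - (w₀:ℂ)^n)‖ := by rw [hdiff]
    _ ≤ ∑' n : ℕ, ‖(B n : ℂ) * (w^n - (w₀:ℂ)^n)‖ := norm_tsum_le_tsum_norm hnorm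
    _ ≤ ∑' n, g n := by
        refine Summable.tsum_le_tsum (fun n => ?_) hnorm hgsum
        rw [norm_mul, Complex.norm_real, Real.norm_eq_abs, abs_of_nonneg (hBpos n).le]
        refine mul_le_mul_of_nonneg_left ?_ (hBpos n).le
        exact (pow_diff_bound hρ0 hwρ hw0ρ n).trans
          (mul_le_mul_of_nonneg_left hw (by positivity))
    _ = ε*(1-w₀) * (∑' n : ℕ, ((n:ℝ)+1) * B (n+1) * ρ^n) := hgval
    _ ≤ (1/2) * F B w₀ := central hpoly hBpos hA hK hBmono hBle hε0 hε2 hε3 hw0 hw1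

end fprop

end Stmt11


set_option maxHeartbeats 2000000 in
/-- For `ω ∈ 𝒟̂` there is `r ∈ (0,1)` with `|B^ω_a(z)| ≍ B^ω_a(a)` uniformly for
`a ∈ 𝔻` and `z` in the pseudohyperbolic disc `Δ(a,r)`. -/
theorem stmt_11 (ω : ℝ → ℝ)
    (hnn : ∀ r ∈ Set.Ico (0:ℝ) 1, 0 ≤ ω r)
    (hint : MeasureTheory.IntegrableOn ω (Set.Ioc (0:ℝ) 1))
    (hpos : ∀ r ∈ Set.Ico (0:ℝ) 1, 0 < ∫ s in Set.Ioc r 1, ω s)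
    (hD : ∃ C : ℝ, 1 ≤ C ∧ ∀ r ∈ Set.Ico (0:ℝ) 1,
      (∫ s in Set.Ioc r 1, ω s) ≤ C * ∫ s in Set.Ioc ((1 + r) / 2) 1, ω s) :
    ∃ r : ℝ, 0 < r ∧ r < 1 ∧ ∃ c > (0:ℝ), ∃ C > (0:ℝ),
      ∀ a z : ℂ, ‖a‖ < 1 → ‖z‖ < 1 →
        ‖(a - z) / (1 - (starRingEnd ℂ) a * z)‖ < r →
          c * (ker ω a a).re ≤ ‖ker ω a z‖ ∧
            ‖ker ω a z‖ ≤ C * (ker ω a a).re := by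

  classical
  obtain ⟨C, hC, hD⟩ := hD
  have hC0 : (0:ℝ) < C := lt_of_lt_of_le one_pos hC
  -- choose k
  set k : ℕ := ⌈(4:ℝ)*Real.log (2*C^2)⌉₊ + 1 with hkdef
  have hk : 1 ≤ k := by omega
  have h2C : (0:ℝ) < 2*C^2 := by positivity
  have hke : Real.exp (-(k:ℝ)/4) ≤ 1/(2*C^2) := by
    rw [one_div, ← Real.exp_log (inv_pos.mpr h2C), Real.log_inv]
    apply Real.exp_le_exp.mpr
    have h1 : (4:ℝ)*Real.log (2*C^2) ≤ (⌈(4:ℝ)*Real.log (2*C^2)⌉₊ : ℝ) := Nat.le_ceil _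
    have h2 : ((⌈(4:ℝ)*Real.log (2*C^2)⌉₊ : ℕ) : ℝ) ≤ (k:ℝ) := by
      rw [hkdef]; push_cast; linarith
    linarith
  -- the comparison constant
  set K : ℝ := 2*C*Real.exp (4*k) with hKdef
  have hK : 1 ≤ K := by
    have h1 : (1:ℝ) ≤ Real.exp (4*k) := Real.one_le_exp (by positivity)
    rw [hKdef]; nlinarith
  have hK0 : (0:ℝ) < K := lt_of_lt_of_le one_pos hK
  have hcmp : ∀ p q : ℕ, q ≤ 2*p+2 → mom ω p ≤ K * mom ω q :=
    Stmt11.mom_compare hC hnn hint hpos hD hk hke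
  -- the coefficients
  set B : ℕ → ℝ := fun n => (2 * mom ω (2*n+1))⁻¹ with hBdef
  have hmompos : ∀ n, 0 < mom ω n := Stmt11.mom_pos hnn hint hpos
  have hBpos : ∀ n, 0 < B n := fun n => by
    rw [hBdef]; exact inv_pos.mpr (by linarith [hmompos (2*n+1)])
  have hBmono : ∀ {i j : ℕ}, i ≤ j → B i ≤ B j := by
    intro i j hij
    rw [hBdef]
    have h1 : mom ω (2*j+1) ≤ mom ω (2*i+1) := Stmt11.mom_anti hnn hint (by omega)
    have h2 : 0 < 2*mom ω (2*j+1) := by linarith [hmompos (2*j+1)]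
    exact inv_anti₀ h2 (by linarith)
  have hBle : ∀ n j : ℕ, n ≤ 2*j+1 → B n ≤ K * B j := by
    intro n j hnj
    have hmq := hmompos (2*n+1)
    have hmp := hmompos (2*j+1)
    have hc : mom ω (2*j+1) ≤ K * mom ω (2*n+1) := hcmp (2*j+1) (2*n+1) (by omega)
    have key : (2*mom ω (2*n+1))⁻¹ * (2*mom ω (2*j+1)) ≤ K := by
      calc (2*mom ω (2*n+1))⁻¹ * (2*mom ω (2*j+1))
          ≤ (2*mom ω (2*n+1))⁻¹ * (K * (2*mom ω (2*n+1))) := by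
            refine mul_le_mul_of_nonneg_left (by linarith) (inv_nonneg.mpr (by linarith))
        _ = K * ((2*mom ω (2*n+1))⁻¹ * (2*mom ω (2*n+1))) := by ring
        _ = K := by rw [inv_mul_cancel₀ (by positivity), mul_one]
    have hBn : B n = ((2*mom ω (2*n+1))⁻¹ * (2*mom ω (2*j+1))) * (2*mom ω (2*j+1))⁻¹ := by
      rw [hBdef, mul_assoc, mul_inv_cancel₀ (by positivity), mul_one]
    rw [hBn, hBdef]
    exact mul_le_mul_of_nonneg_right key (inv_nonneg.mpr (by linarith))
  -- polynomial growth
  obtain ⟨m, hpoly⟩ := Stmt11.B_poly hK hBpos hBle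
  set A : ℝ := B 0 * K with hAdef
  have hA : 0 < A := by rw [hAdef]; exact mul_pos (hBpos 0) hK0
  -- the comparison constant L and the radius
  set L : ℝ := 4*K^2 + Stmt11.F B (3/4) / B 0 with hLdef
  have hF34 : 0 < Stmt11.F B (3/4) :=
    lt_of_lt_of_le (hBpos 0) (Stmt11.F_ge hpoly hBpos (by norm_num) (by norm_num))
  have hL0 : 0 < L := by
    have hdiv : 0 < Stmt11.F B (3/4)/B 0 := div_pos hF34 (hBpos 0)
    rw [hLdef]; nlinarith [sq_nonneg K]
  set ε : ℝ := min (1/2) (1/(8*K*L)) with hεdef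
  have hKL : (0:ℝ) < 8*K*L := by positivity
  have hε0 : 0 < ε := lt_min (by norm_num) (by positivity)
  have hε2 : ε ≤ 1/2 := min_le_left _ _
  have hε3 : 4*K*L*ε ≤ 1/2 := by
    have h1 : ε ≤ 1/(8*K*L) := min_le_right _ _
    have h2 : 4*K*L*(1/(8*K*L)) = 1/2 := by field_simp; ring
    calc 4*K*L*ε ≤ 4*K*L*(1/(8*K*L)) := mul_le_mul_of_nonneg_left h1 (by positivity)
      _ = 1/2 := h2
  refine ⟨ε/2, by positivity, by linarith, 1/2, by norm_num, 3/2, by norm_num, ?_⟩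
  intro a z ha hz hρ
  -- the geometry
  set w₀ : ℝ := Complex.normSq a with hw₀def
  have hw0 : 0 ≤ w₀ := Complex.normSq_nonneg a
  have hw1 : w₀ < 1 := by
    rw [hw₀def, Complex.normSq_eq_norm_sq]
    nlinarith [norm_nonneg a]
  set w : ℂ := (starRingEnd ℂ) a * z with hwdef
  set d : ℂ := 1 - (starRingEnd ℂ) a * z with hddef
  have hconj : (starRingEnd ℂ) a * a = (w₀:ℂ) := by
    rw [mul_comm]; exact Complex.mul_conj a
  have hnconj : ‖(starRingEnd ℂ) a‖ = ‖a‖ := by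
    exact Complex.norm_conj a
  have hdne : d ≠ 0 := by
    rw [hddef]
    intro h
    have h1 : (starRingEnd ℂ) a * z = 1 := by
      have := sub_eq_zero.mp h; exact this.symm
    have h2 : ‖(starRingEnd ℂ) a * z‖ < 1 := by
      rw [norm_mul, hnconj]
      nlinarith [norm_nonneg a, norm_nonneg z]
    rw [h1, norm_one] at h2
    exact lt_irrefl _ h2
  have hdpos : 0 < ‖d‖ := norm_pos_iff.mpr hdne
  have haz : ‖a - z‖ < (ε/2) * ‖d‖ := by
    have h1 : ‖(a - z) / d‖ = ‖a - z‖ / ‖d‖ := by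
      rw [norm_div]
    rw [hddef] at h1
    rw [h1] at hρ
    rwa [div_lt_iff₀ hdpos] at hρ
  have hd1 : ‖d‖ ≤ (1 - w₀) + ‖a - z‖ := by
    have hdecomp : d = ((1 - w₀ : ℝ):ℂ) + (starRingEnd ℂ) a * (a - z) := by
      rw [hddef]
      push_cast
      rw [← hconj]
      ring
    calc ‖d‖ = ‖((1 - w₀ : ℝ):ℂ) + (starRingEnd ℂ) a * (a - z)‖ := by rw [← hdecomp]
      _ ≤ ‖((1 - w₀ : ℝ):ℂ)‖ + ‖(starRingEnd ℂ) a * (a - z)‖ := norm_add_le _ _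
      _ ≤ (1 - w₀) + ‖a - z‖ := by
          rw [Complex.norm_real, Real.norm_eq_abs, abs_of_nonneg (by linarith), norm_mul, hnconj]
          nlinarith [norm_nonneg (a - z), norm_nonneg a]
  have hd2 : ‖d‖ * (1 - ε/2) ≤ 1 - w₀ := by nlinarith
  have hd3 : ‖d‖ ≤ (1-w₀) / (1 - ε/2) := by
    rw [le_div_iff₀ (by linarith)]
    exact hd2
  have hw : ‖w - (w₀:ℂ)‖ ≤ ε*(1-w₀) := by
    have hdecomp : w - (w₀:ℂ) = (starRingEnd ℂ) a * (z - a) := by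
      rw [hwdef, ← hconj]; ring
    have h1 : ‖w - (w₀:ℂ)‖ ≤ ‖a - z‖ := by
      rw [hdecomp, norm_mul, hnconj, ← norm_neg (z - a), neg_sub]
      nlinarith [norm_nonneg (a-z), norm_nonneg a]
    have h2 : (1-w₀)/(1-ε/2) ≤ 2*(1-w₀) := by
      rw [div_le_iff₀ (by linarith)]
      nlinarith
    calc ‖w - (w₀:ℂ)‖ ≤ ‖a - z‖ := h1
      _ ≤ (ε/2) * ‖d‖ := haz.le
      _ ≤ (ε/2) * ((1-w₀)/(1-ε/2)) := mul_le_mul_of_nonneg_left hd3 (by positivity)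
      _ ≤ (ε/2) * (2*(1-w₀)) := mul_le_mul_of_nonneg_left h2 (by positivity)
      _ = ε*(1-w₀) := by ring
  -- rewrite the kernels
  have hker : ∀ z' : ℂ, ker ω a z' = ∑' n : ℕ, (B n : ℂ) * ((starRingEnd ℂ) a * z')^n := by
    intro z'
    rw [ker]
    refine tsum_congr fun n => ?_
    rw [hBdef, div_eq_mul_inv]
    push_cast
    ring
  have hkeraa : ker ω a a = ((Stmt11.F B w₀ : ℝ):ℂ) := by
    rw [hker a, hconj, Stmt11.F, Complex.ofReal_tsum]
    refine tsum_congr fun n => ?_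
    push_cast
    ring
  have hre : (ker ω a a).re = Stmt11.F B w₀ := by rw [hkeraa, Complex.ofReal_re]
  -- the main estimate
  have hest : ‖(∑' n : ℕ, (B n : ℂ) * w^n) - ((Stmt11.F B w₀ : ℝ) : ℂ)‖ ≤ (1/2) * Stmt11.F B w₀ :=
    Stmt11.complex_est hpoly hBpos hA hK hBmono hBle hε0 hε2
      (by rw [← hLdef]; exact hε3) hw0 hw1 hw
  have hkeraz : ker ω a z = ∑' n : ℕ, (B n : ℂ) * w^n := by rw [hker z, hwdef]
  have hFw : 0 < Stmt11.F B w₀ :=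
    lt_of_lt_of_le (hBpos 0) (Stmt11.F_ge hpoly hBpos hw0 hw1)
  have habs : ‖ker ω a z‖ = ‖∑' n : ℕ, (B n : ℂ) * w^n‖ := by
    rw [hkeraz]
  have hnF : ‖((Stmt11.F B w₀ : ℝ):ℂ)‖ = Stmt11.F B w₀ := by
    rw [Complex.norm_real, Real.norm_eq_abs, abs_of_nonneg hFw.le]
  constructor
  · -- lower bound
    rw [hre, habs]
    have h1 : ‖((Stmt11.F B w₀ : ℝ):ℂ)‖ - ‖((Stmt11.F B w₀ : ℝ):ℂ) - (∑' n : ℕ, (B n : ℂ) * w^n)‖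
        ≤ ‖∑' n : ℕ, (B n : ℂ) * w^n‖ := by
      have := norm_sub_norm_le ((Stmt11.F B w₀ : ℝ):ℂ) (∑' n : ℕ, (B n : ℂ) * w^n)
      linarith
    rw [hnF, norm_sub_rev] at h1
    linarith
  · -- upper bound
    rw [hre, habs]
    have h1 : ‖∑' n : ℕ, (B n : ℂ) * w^n‖
        ≤ ‖(∑' n : ℕ, (B n : ℂ) * w^n) - ((Stmt11.F B w₀ : ℝ):ℂ)‖ + ‖((Stmt11.F B w₀ : ℝ):ℂ)‖ := by
      have h2 := norm_add_le ((∑' n : ℕ, (B n : ℂ) * w^n) - ((Stmt11.F B w₀ : ℝ):ℂ))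
        ((Stmt11.F B w₀ : ℝ):ℂ)
      simpa using h2
    rw [hnF] at h1
    linarith
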